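/- Let ε ∈ (0,1), d ≥ 0 an integer, and x₀,…,x_d ∈ ℝ. If |∑_{k=0}^d λ^k x_k| ≤ 1 for all λ ∈ [−ε, ε], then |∑_{k=0}^d x_k| ≤ 2^{d²/2 + d} · ε^{−d}. -/

import Mathlib

open Finset Polynomial

lemma keyNat (d : ℕ) : d^(2*d) ≤ (Nat.factorial d)^2 * 2^(d^2) := by
  induction d with
  | zero => simp
  | succ n ih =>
    rcases Nat.eq_zero_or_pos n with h | h
    · subst h; decide
    · have h2 : (n+1)^(2*n) ≤ (2*n)^(2*n) := Nat.pow_le_pow_left (by omega) _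
      calc (n+1)^(2*(n+1)) = (n+1)^2 * (n+1)^(2*n) := by ring
        _ ≤ (n+1)^2 * (2*n)^(2*n) := Nat.mul_le_mul_left _ h2
        _ = (n+1)^2 * (2^(2*n) * n^(2*n)) := by rw [Nat.mul_pow]
        _ ≤ (n+1)^2 * (2^(2*n) * ((Nat.factorial n)^2 * 2^(n^2))) :=
            Nat.mul_le_mul_left _ (Nat.mul_le_mul_left _ ih)
        _ = ((n+1).factorial)^2 * 2^(n^2 + 2*n) := by rw [Nat.factorial_succ, pow_add]; ring
        _ ≤ ((n+1).factorial)^2 * 2^((n+1)^2) :=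
            Nat.mul_le_mul_left _ (Nat.pow_le_pow_right (by norm_num) (by ring_nf; omega))


lemma prodRangeSub (J : ℕ) : ∏ i ∈ Finset.range J, (J - i) = J.factorial := by
  rw [← Finset.prod_range_reflect, ← Finset.prod_range_add_one_eq_factorial]
  exact Finset.prod_congr rfl fun i hi => by rw [Finset.mem_range] at hi; omega

lemma prodIcoSub (J d : ℕ) (h : J ≤ d) :
    ∏ i ∈ Finset.Ico (J+1) (d+1), (i - J) = (d - J).factorial := by
  rw [Finset.prod_Ico_eq_prod_range, ← Finset.prod_range_add_one_eq_factorial]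
  have h2 : d + 1 - (J + 1) = d - J := by omega
  rw [h2]
  exact Finset.prod_congr rfl fun i hi => by omega

lemma factProd (d : ℕ) (j : Fin (d+1)) :
    ∏ i ∈ Finset.univ.erase j, |((j:ℕ):ℝ) - ((i:ℕ):ℝ)|
      = (Nat.factorial (j:ℕ)) * (Nat.factorial (d - (j:ℕ))) := by
  set J := (j:ℕ) with hJ
  have hJd : J ≤ d := Nat.lt_succ_iff.mp j.isLt
  set G : ℕ → ℝ := fun n => if n = J then 1 else |(J:ℝ) - (n:ℝ)| with hG
  have step1 : ∏ i ∈ Finset.univ.erase j, |(J:ℝ) - ((i:ℕ):ℝ)|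
      = ∏ i : Fin (d+1), G (i:ℕ) := by
    rw [← Finset.mul_prod_erase _ (fun i : Fin (d+1) => G (i:ℕ)) (Finset.mem_univ j)]
    have : G (j:ℕ) = 1 := by rw [hG]; exact if_pos rfl
    rw [this, one_mul]
    apply Finset.prod_congr rfl
    intro i hi
    have hne : (i:ℕ) ≠ J := by
      intro hc
      exact (Finset.mem_erase.mp hi).1 (Fin.ext hc)
    simp [hG, hne]
  have step2 : ∏ i : Fin (d+1), G (i:ℕ) = ∏ i ∈ Finset.range (d+1), G i :=
    Fin.prod_univ_eq_prod_range G (d+1)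
  have step3 : ∏ i ∈ Finset.range (d+1), G i
      = ∏ i ∈ (Finset.range (d+1)).erase J, G i := by
    rw [← Finset.mul_prod_erase _ G (Finset.mem_range.mpr (show J < d + 1 by omega))]
    have : G J = 1 := by simp [hG]
    rw [this, one_mul]
  have hsplit : (Finset.range (d+1)).erase J = Finset.range J ∪ Finset.Ico (J+1) (d+1) := by
    ext i
    simp only [Finset.mem_erase, Finset.mem_range, Finset.mem_union, Finset.mem_Ico]
    omega
  have hdisj : Disjoint (Finset.range J) (Finset.Ico (J+1) (d+1)) := by
    rw [Finset.disjoint_left]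
    intro i hi hi'
    simp only [Finset.mem_range] at hi
    simp only [Finset.mem_Ico] at hi'
    omega
  have hleft : ∏ i ∈ Finset.range J, G i = (Nat.factorial J : ℝ) := by
    rw [← prodRangeSub J]
    push_cast
    apply Finset.prod_congr rfl
    intro i hi
    rw [Finset.mem_range] at hi
    have hne : i ≠ J := by omega
    have hGi : G i = |(J:ℝ) - (i:ℝ)| := by simp [hG, hne]
    have hlt : (i:ℝ) < (J:ℝ) := by exact_mod_cast hi
    rw [hGi, abs_of_pos (by linarith), Nat.cast_sub (le_of_lt hi)]
  have hright : ∏ i ∈ Finset.Ico (J+1) (d+1), G i = (Nat.factorial (d - J) : ℝ) := by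
    rw [← prodIcoSub J d hJd]
    push_cast
    apply Finset.prod_congr rfl
    intro i hi
    rw [Finset.mem_Ico] at hi
    have hne : i ≠ J := by omega
    have hGi : G i = |(J:ℝ) - (i:ℝ)| := by simp [hG, hne]
    have hlt : (J:ℝ) < (i:ℝ) := by exact_mod_cast (show J < i by omega)
    rw [hGi, abs_of_neg (by linarith), Nat.cast_sub (show J ≤ i by omega)]
    push_cast; ring
  rw [step1, step2, step3, hsplit, Finset.prod_union hdisj, hleft, hright]


lemma mainBound (d : ℕ) (hd : 1 ≤ d) (ε : ℝ) (hε : ε ∈ Set.Ioo (0:ℝ) 1) (x : Fin (d + 1) → ℝ)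
    (h : ∀ lam ∈ Set.Icc (-ε) ε, |∑ k : Fin (d + 1), lam ^ (k : ℕ) * x k| ≤ 1) :
    |∑ k : Fin (d + 1), x k| ≤ ((d:ℝ)/ε)^d * (2^d / (Nat.factorial d)) := by
  obtain ⟨hε0, hε1⟩ := hε
  have hd0 : (0:ℝ) < d := by exact_mod_cast hd
  set v : Fin (d+1) → ℝ := fun j => ε * (2*((j:ℕ):ℝ) - d) / d with hv
  have hv_mem : ∀ j, v j ∈ Set.Icc (-ε) ε := by
    intro j
    have hj : ((j:ℕ):ℝ) ≤ d := by exact_mod_cast Nat.lt_succ_iff.mp j.isLt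
    have hj0 : (0:ℝ) ≤ ((j:ℕ):ℝ) := Nat.cast_nonneg _
    constructor
    · rw [le_div_iff₀ hd0]; nlinarith
    · rw [div_le_iff₀ hd0]; nlinarith
  have hv_inj : Set.InjOn v (Finset.univ : Finset (Fin (d+1))) := by
    intro i _ j _ hij
    simp only [hv] at hij
    field_simp at hij
    have h' : ((i:ℕ):ℝ) = ((j:ℕ):ℝ) := by linarith
    exact Fin.ext (by exact_mod_cast h')
  set p : ℝ[X] := ∑ k : Fin (d+1), C (x k) * X ^ (k:ℕ) with hp
  have hpeval : ∀ t : ℝ, p.eval t = ∑ k : Fin (d+1), t ^ (k:ℕ) * x k := by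
    intro t
    rw [hp, eval_finset_sum]
    exact Finset.sum_congr rfl fun k _ => by rw [eval_mul, eval_C, eval_pow, eval_X, mul_comm]
  have hdeg : p.degree < (Finset.univ : Finset (Fin (d+1))).card := by
    rw [Finset.card_univ, Fintype.card_fin]
    apply lt_of_le_of_lt (Polynomial.degree_sum_le _ _)
    rw [Finset.sup_lt_iff (by exact_mod_cast (WithBot.bot_lt_coe (d+1)))]
    intro k _
    refine lt_of_le_of_lt (Polynomial.degree_C_mul_X_pow_le _ _) ?_
    exact_mod_cast k.isLt
  have heq := Lagrange.eq_interpolate hv_inj hdeg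
  have heval1 : p.eval 1 = ∑ i : Fin (d+1), p.eval (v i) * (Lagrange.basis Finset.univ v i).eval 1 := by
    conv_lhs => rw [heq]
    rw [Lagrange.interpolate_apply, eval_finset_sum]
    exact Finset.sum_congr rfl fun i _ => by rw [eval_mul, eval_C]
  have hB : ∀ i : Fin (d+1),
      |(Lagrange.basis Finset.univ v i).eval 1|
        ≤ ((d:ℝ)/ε)^d * (((Nat.factorial (i:ℕ) * Nat.factorial (d-(i:ℕ)) : ℕ):ℝ))⁻¹ := by
    intro i
    have hBeq : |(Lagrange.basis Finset.univ v i).eval 1|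
        = ∏ k ∈ Finset.univ.erase i, |(v i - v k)⁻¹ * (1 - v k)| := by
      rw [Lagrange.basis, eval_prod, Finset.abs_prod]
      apply Finset.prod_congr rfl
      intro k _
      rw [Lagrange.basisDivisor, eval_mul, eval_C, eval_sub, eval_X, eval_C]
    rw [hBeq]
    have hstep : ∏ k ∈ Finset.univ.erase i, |(v i - v k)⁻¹ * (1 - v k)|
        ≤ ∏ k ∈ Finset.univ.erase i, (d:ℝ)/(ε * |((i:ℕ):ℝ) - ((k:ℕ):ℝ)|) := by
      apply Finset.prod_le_prod (fun k _ => abs_nonneg _)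
      intro k hk
      have hki : k ≠ i := (Finset.mem_erase.mp hk).1
      have hA1 : (1:ℝ) ≤ |((i:ℕ):ℝ) - ((k:ℕ):ℝ)| := by
        have hne : (i:ℕ) ≠ (k:ℕ) := fun hc => hki (Fin.ext hc.symm)
        rcases Nat.lt_or_ge (i:ℕ) (k:ℕ) with hlt | hge
        · have h1 : ((i:ℕ):ℝ) + 1 ≤ ((k:ℕ):ℝ) := by exact_mod_cast hlt
          rw [abs_sub_comm, abs_of_nonneg (by linarith)]; linarith
        · have h1 : ((k:ℕ):ℝ) + 1 ≤ ((i:ℕ):ℝ) := by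
            exact_mod_cast lt_of_le_of_ne hge (fun hc => hne hc.symm)
          rw [abs_of_nonneg (by linarith)]; linarith
      set A := |((i:ℕ):ℝ) - ((k:ℕ):ℝ)| with hA
      have hA0 : 0 < A := lt_of_lt_of_le one_pos hA1
      have hvik : |v i - v k| = 2*ε*A/d := by
        have : v i - v k = 2*ε*(((i:ℕ):ℝ) - ((k:ℕ):ℝ))/d := by
          simp only [hv]; field_simp; ring
        rw [this, abs_div, abs_of_pos hd0, abs_mul, abs_of_pos (by positivity : (0:ℝ) < 2*ε), hA]
      have hnum : |1 - v k| ≤ 2 := by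
        obtain ⟨hl, hr⟩ := hv_mem k
        rw [abs_of_pos (by linarith)]
        linarith
      rw [abs_mul, abs_inv, hvik, mul_comm]
      have hden : (0:ℝ) < 2*ε*A/d := by positivity
      calc |1 - v k| * (2*ε*A/d)⁻¹ ≤ 2 * (2*ε*A/d)⁻¹ := by
            apply mul_le_mul_of_nonneg_right hnum (by positivity)
        _ = (d:ℝ)/(ε*A) := by field_simp
    refine le_trans hstep (le_of_eq ?_)
    have hcard : (Finset.univ.erase i).card = d := by
      rw [Finset.card_erase_of_mem (Finset.mem_univ i), Finset.card_univ, Fintype.card_fin]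
      omega
    have : ∏ k ∈ Finset.univ.erase i, (d:ℝ)/(ε * |((i:ℕ):ℝ) - ((k:ℕ):ℝ)|)
        = ∏ k ∈ Finset.univ.erase i, ((d:ℝ)/ε) * |((i:ℕ):ℝ) - ((k:ℕ):ℝ)|⁻¹ := by
      apply Finset.prod_congr rfl
      intro k _
      rw [div_mul_eq_div_div, div_eq_mul_inv]
    rw [this, Finset.prod_mul_distrib, Finset.prod_const, hcard, Finset.prod_inv_distrib,
      factProd d i]
    push_cast
    ring
  have hsum2 : ∑ i : Fin (d+1), (((Nat.factorial (i:ℕ) * Nat.factorial (d-(i:ℕ)) : ℕ):ℝ))⁻¹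
      = 2^d / (Nat.factorial d : ℝ) := by
    rw [Fin.sum_univ_eq_sum_range (fun n => (((Nat.factorial n * Nat.factorial (d-n) : ℕ):ℝ))⁻¹) (d+1)]
    have hterm : ∀ n ∈ Finset.range (d+1),
        (((Nat.factorial n * Nat.factorial (d-n) : ℕ):ℝ))⁻¹ = (d.choose n : ℝ) / (Nat.factorial d : ℝ) := by
      intro n hn
      have hnd : n ≤ d := Nat.lt_succ_iff.mp (Finset.mem_range.mp hn)
      have hnat : d.choose n * (Nat.factorial n * Nat.factorial (d-n)) = Nat.factorial d := by
        rw [← Nat.choose_mul_factorial_mul_factorial hnd]; ring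
      rw [eq_div_iff (by exact_mod_cast (Nat.factorial_pos d).ne')]
      rw [inv_mul_eq_iff_eq_mul₀ (by exact_mod_cast (Nat.mul_pos (Nat.factorial_pos n) (Nat.factorial_pos (d-n))).ne')]
      exact_mod_cast (by rw [← hnat]; ring : Nat.factorial d = (Nat.factorial n * Nat.factorial (d-n)) * d.choose n)
    rw [Finset.sum_congr rfl hterm, ← Finset.sum_div]
    congr 1
    rw_mod_cast [Nat.sum_range_choose]
  have hfinal : ∑ k : Fin (d+1), x k = p.eval 1 := by
    rw [hpeval]; simp
  rw [hfinal, heval1]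
  calc |∑ i : Fin (d+1), p.eval (v i) * (Lagrange.basis Finset.univ v i).eval 1|
      ≤ ∑ i : Fin (d+1), |p.eval (v i) * (Lagrange.basis Finset.univ v i).eval 1| :=
        Finset.abs_sum_le_sum_abs _ _
    _ ≤ ∑ i : Fin (d+1), ((d:ℝ)/ε)^d * (((Nat.factorial (i:ℕ) * Nat.factorial (d-(i:ℕ)) : ℕ):ℝ))⁻¹ := by
        apply Finset.sum_le_sum
        intro i _
        rw [abs_mul]
        have h1 : |p.eval (v i)| ≤ 1 := by rw [hpeval]; exact h _ (hv_mem i)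
        calc |p.eval (v i)| * |(Lagrange.basis Finset.univ v i).eval 1|
            ≤ 1 * (((d:ℝ)/ε)^d * (((Nat.factorial (i:ℕ) * Nat.factorial (d-(i:ℕ)) : ℕ):ℝ))⁻¹) :=
              mul_le_mul h1 (hB i) (abs_nonneg _) one_pos.le
          _ = _ := one_mul _
    _ = ((d:ℝ)/ε)^d * (2^d / (Nat.factorial d : ℝ)) := by
        rw [← Finset.mul_sum, hsum2]

lemma finalComp (d : ℕ) (ε : ℝ) (hε0 : 0 < ε) :
    ((d:ℝ)/ε)^d * (2^d / (Nat.factorial d : ℝ)) ≤ (2:ℝ)^((d:ℝ)^2/2 + d) * ε^(-(d:ℝ)) := by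
  have hkey : (d:ℝ)^d ≤ (2:ℝ)^((d:ℝ)^2/2) * (Nat.factorial d : ℝ) := by
    rw [← pow_le_pow_iff_left₀ (by positivity : (0:ℝ) ≤ (d:ℝ)^d)
      (by positivity : (0:ℝ) ≤ (2:ℝ)^((d:ℝ)^2/2) * (Nat.factorial d : ℝ)) (two_ne_zero)]
    have e1 : ((2:ℝ)^((d:ℝ)^2/2))^2 = (2:ℝ)^((d:ℝ)^2) := by
      rw [← Real.rpow_natCast ((2:ℝ)^((d:ℝ)^2/2)) 2, ← Real.rpow_mul (by norm_num : (0:ℝ) ≤ 2)]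
      norm_num
    have e2 : (2:ℝ)^((d:ℝ)^2) = ((2^(d^2) : ℕ) : ℝ) := by
      have : ((d:ℝ))^2 = ((d^2 : ℕ):ℝ) := by push_cast; ring
      rw [this, Real.rpow_natCast]
      push_cast
      ring
    rw [mul_pow, e1, e2]
    calc ((d:ℝ)^d)^2 = ((d^(2*d) : ℕ):ℝ) := by push_cast; ring
      _ ≤ ((Nat.factorial d ^2 * 2^(d^2) : ℕ):ℝ) := by exact_mod_cast keyNat d
      _ = ((2^(d^2):ℕ):ℝ) * ((Nat.factorial d : ℕ):ℝ)^2 := by push_cast; ring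
  have hfac : (0:ℝ) < (Nat.factorial d : ℝ) := by exact_mod_cast Nat.factorial_pos d
  calc ((d:ℝ)/ε)^d * (2^d / (Nat.factorial d : ℝ))
      = ((d:ℝ)^d * (2^d / (Nat.factorial d : ℝ))) * (ε^d)⁻¹ := by
        rw [div_pow]; ring
    _ ≤ (((2:ℝ)^((d:ℝ)^2/2) * (Nat.factorial d : ℝ)) * (2^d / (Nat.factorial d : ℝ))) * (ε^d)⁻¹ := by
        apply mul_le_mul_of_nonneg_right _ (by positivity)
        exact mul_le_mul_of_nonneg_right hkey (by positivity)
    _ = ((2:ℝ)^((d:ℝ)^2/2) * 2^d) * (ε^d)⁻¹ := by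
        field_simp
    _ = (2:ℝ)^((d:ℝ)^2/2 + d) * ε^(-(d:ℝ)) := by
        rw [Real.rpow_add two_pos, Real.rpow_natCast, Real.rpow_neg hε0.le, Real.rpow_natCast]


/-- scalar version of Lemma on polynomial bounds. -/
theorem stmt1 (d : ℕ) (ε : ℝ) (hε : ε ∈ Set.Ioo (0:ℝ) 1) (x : Fin (d + 1) → ℝ)
    (h : ∀ lam ∈ Set.Icc (-ε) ε, |∑ k : Fin (d + 1), lam ^ (k : ℕ) * x k| ≤ 1) :
    |∑ k : Fin (d + 1), x k| ≤ (2 : ℝ) ^ ((d : ℝ) ^ 2 / 2 + d) * ε ^ (-(d : ℝ)) := by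
  obtain ⟨hε0, hε1⟩ := hε
  rcases Nat.eq_zero_or_pos d with hd | hd
  · subst hd
    have h0 := h 0 ⟨by linarith, hε0.le⟩
    simp only [Fin.sum_univ_succ, Fin.sum_univ_zero] at h0 ⊢
    norm_num at h0 ⊢
    simpa using h0
  · exact le_trans (mainBound d hd ε ⟨hε0, hε1⟩ x h) (finalComp d ε hε0)
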